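/- Gumbel-Max trick for categorical sampling: let S be a finite nonempty type, let p be a strictly positive probability vector on S, and let G be distributed according to μ_G^S. Then for every i ∈ S, the probability of the event { g : S → ℝ | i is the strict argmax of (log ∘ p) + g } equals p i. In particular, the map g ↦ argmax_{s} (log (p s) + g s) pushes μ_G^S forward (on the full-measure set where the strict argmax exists) to the categorical distribution with probability vector p. -/

import Mathlib

open MeasureTheory Real

/-- The uniform probability measure on the open interval (0,1). -/
noncomputable def uniform01 : Measure ℝ := volume.restrict (Set.Ioo (0 : ℝ) 1)

/-- The standard Gumbel distribution on ℝ: the pushforward of the uniform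
measure on (0,1) under `u ↦ -log(-log u)`; its CDF is `x ↦ exp (-exp (-x))`. -/
noncomputable def stdGumbel : Measure ℝ :=
  uniform01.map (fun u : ℝ => -Real.log (-Real.log u))

/-- The product measure on `S → ℝ` with i.i.d. standard Gumbel coordinates. -/
noncomputable def gumbelPi (S : Type*) [Fintype S] : Measure (S → ℝ) :=
  Measure.pi (fun _ : S => stdGumbel)

/-- Gumbel-Max trick: if `p` is a strictly positive probability vector on the
finite nonempty type `S` and the noise `g` is i.i.d. standard Gumbel, then for
every `i`, the probability that `i` is the strict argmax of `log ∘ p + g`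
equals `p i`; i.e. the Gumbel-Max mechanism samples from the categorical
distribution with probability vector `p`. -/
lemma meas_phi : Measurable (fun u : ℝ => -Real.log (-Real.log u)) :=
  (Real.measurable_log.comp Real.measurable_log.neg).neg

instance : IsProbabilityMeasure uniform01 := by
  constructor
  rw [uniform01, Measure.restrict_apply_univ, Real.volume_Ioo]
  norm_num

instance : IsProbabilityMeasure stdGumbel :=
  Measure.isProbabilityMeasure_map meas_phi.aemeasurable

lemma stdGumbel_Iio (x : ℝ) :
    stdGumbel (Set.Iio x) = ENNReal.ofReal (Real.exp (-Real.exp (-x))) := by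
  rw [stdGumbel, Measure.map_apply meas_phi measurableSet_Iio, uniform01,
    Measure.restrict_apply (meas_phi measurableSet_Iio)]
  have hset : (fun u : ℝ => -Real.log (-Real.log u)) ⁻¹' Set.Iio x ∩ Set.Ioo 0 1
      = Set.Ioo 0 (Real.exp (-Real.exp (-x))) := by
    ext u
    simp only [Set.mem_inter_iff, Set.mem_preimage, Set.mem_Iio, Set.mem_Ioo]
    constructor
    · rintro ⟨h1, h2, h3⟩
      refine ⟨h2, ?_⟩
      have hlu : 0 < -Real.log u := by
        have := Real.log_neg h2 h3; linarith
      have h5 : -x < Real.log (-Real.log u) := by linarith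
      have h4 : Real.exp (-x) < -Real.log u := by
        calc Real.exp (-x) < Real.exp (Real.log (-Real.log u)) := Real.exp_lt_exp.mpr h5
          _ = -Real.log u := Real.exp_log hlu
      have h6 : Real.log u < -Real.exp (-x) := by linarith
      calc u = Real.exp (Real.log u) := (Real.exp_log h2).symm
        _ < Real.exp (-Real.exp (-x)) := Real.exp_lt_exp.mpr h6
    · rintro ⟨h0, hu⟩
      have h1 : u < 1 := lt_trans hu (by
        rw [show (1:ℝ) = Real.exp 0 by simp]
        exact Real.exp_lt_exp.mpr (neg_lt_zero.mpr (Real.exp_pos _)))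
      have hlogu : Real.log u < -Real.exp (-x) := by
        calc Real.log u < Real.log (Real.exp (-Real.exp (-x))) :=
              Real.log_lt_log h0 hu
          _ = -Real.exp (-x) := Real.log_exp _
      have h4 : Real.exp (-x) < -Real.log u := by linarith
      have hlu : 0 < -Real.log u := lt_trans (Real.exp_pos _) h4
      have h5 : -x < Real.log (-Real.log u) := by
        calc -x = Real.log (Real.exp (-x)) := (Real.log_exp _).symm
          _ < Real.log (-Real.log u) := Real.log_lt_log (Real.exp_pos _) h4
      exact ⟨by linarith, h0, h1⟩
  rw [hset, Real.volume_Ioo, sub_zero]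

lemma lintegral_gumbel (a : ℝ) (ha : 0 ≤ a) :
    ∫⁻ t, ENNReal.ofReal (Real.exp (-(a * Real.exp (-t)))) ∂stdGumbel
      = ENNReal.ofReal (1 / (a + 1)) := by
  have hf : Measurable (fun t : ℝ => ENNReal.ofReal (Real.exp (-(a * Real.exp (-t))))) := by
    fun_prop
  rw [stdGumbel, lintegral_map hf meas_phi, uniform01]
  have hcong : ∀ u ∈ Set.Ioo (0:ℝ) 1,
      ENNReal.ofReal (Real.exp (-(a * Real.exp (-(-Real.log (-Real.log u))))))
        = ENNReal.ofReal (u ^ a) := by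
    intro u hu
    have h0 : 0 < u := hu.1
    have hlu : 0 < -Real.log u := by have := Real.log_neg hu.1 hu.2; linarith
    rw [neg_neg, Real.exp_log hlu, Real.rpow_def_of_pos h0]
    ring_nf
  rw [setLIntegral_congr_fun measurableSet_Ioo hcong]
  have hint : IntegrableOn (fun u : ℝ => u ^ a) (Set.Ioo (0:ℝ) 1) volume := by
    have := (intervalIntegral.intervalIntegrable_rpow (μ := volume) (r := a) (a := (0:ℝ)) (b := 1) (Or.inl ha)).1
    exact this.mono_set Set.Ioo_subset_Ioc_self
  rw [← ofReal_integral_eq_lintegral_ofReal hint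
    ((ae_restrict_iff' measurableSet_Ioo).mpr
      (ae_of_all _ fun u hu => Real.rpow_nonneg hu.1.le a))]
  congr 1
  rw [← integral_Ioc_eq_integral_Ioo, ← intervalIntegral.integral_of_le (by norm_num : (0:ℝ) ≤ 1)]
  rw [integral_rpow (Or.inl (by linarith : (-1:ℝ) < a))]
  rw [Real.one_rpow, Real.zero_rpow (by linarith : a + 1 ≠ 0)]
  ring

lemma lintegral_pi_single {α : Type*} [Fintype α] (k : α) (hk : ∀ j : α, j = k)
    (μ : Measure ℝ) [SigmaFinite μ] (f : ℝ → ENNReal) (hf : Measurable f) :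
    ∫⁻ x : α → ℝ, f (x k) ∂(Measure.pi fun _ => μ) = ∫⁻ t, f t ∂μ := by
  have hmap : (Measure.pi fun _ : α => μ).map (Function.eval k) = μ := by
    apply Measure.ext; intro s hs
    rw [Measure.map_apply (measurable_pi_apply k) hs]
    have hpre : Function.eval k ⁻¹' s = Set.pi Set.univ (fun _ : α => s) := by
      ext x
      simp only [Set.mem_preimage, Function.eval, Set.mem_pi, Set.mem_univ, forall_true_left]
      constructor
      · intro h j; rw [hk j]; exact h
      · intro h; exact h k
    have hcard : Fintype.card α = 1 := Fintype.card_eq_one_iff.mpr ⟨k, hk⟩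
    rw [hpre, Measure.pi_pi, Finset.prod_const, Finset.card_univ, hcard, pow_one]
  conv_rhs => rw [← hmap]
  rw [lintegral_map hf (measurable_pi_apply k)]

theorem gumbelMax_categorical (S : Type*) [Fintype S] [Nonempty S]
    (p : S → ℝ) (hpos : ∀ s, 0 < p s) (hsum : ∑ s, p s = 1) (i : S) :
    gumbelPi S {g : S → ℝ | ∀ j : S, j ≠ i →
        Real.log (p j) + g j < Real.log (p i) + g i}
      = ENNReal.ofReal (p i) := by
  classical
  set c : S → ℝ := fun j => Real.log (p j) with hc
  set B : Set (S → ℝ) := {g : S → ℝ | ∀ j : S, j ≠ i → c j + g j < c i + g i} with hB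
  have hBmeas : MeasurableSet B := by
    have : B = ⋂ j, ⋂ _ : j ≠ i, {g : S → ℝ | c j + g j < c i + g i} := by
      ext g; simp [hB]
    rw [this]
    refine MeasurableSet.iInter fun j => MeasurableSet.iInter fun _ => ?_
    exact measurableSet_lt (measurable_const.add (measurable_pi_apply j))
      (measurable_const.add (measurable_pi_apply i))
  have hmp := measurePreserving_piEquivPiSubtypeProd (fun _ : S => stdGumbel) (fun j => j = i)
  set a : ℝ := (1 - p i) / p i with ha
  have hpi1 : p i ≤ 1 := hsum ▸ Finset.single_le_sum (fun j _ => (hpos j).le) (Finset.mem_univ i)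
  have ha0 : 0 ≤ a := div_nonneg (by linarith) (hpos i).le
  have hsub : ∑ j : {j : S // ¬ j = i}, p j.1 = 1 - p i := by
    rw [← Finset.sum_subtype (Finset.univ.erase i)
        (fun x => by simp [Finset.mem_erase, And.comm]) p,
      Finset.sum_erase_eq_sub (Finset.mem_univ i), hsum]
  have hev : ∀ (x : {j : S // j = i} → ℝ) (v : {j : S // ¬ j = i} → ℝ) (j : S),
      (MeasurableEquiv.piEquivPiSubtypeProd (fun _ : S => ℝ) (fun j => j = i)).symm (x, v) j
        = if h : j = i then x ⟨j, h⟩ else v ⟨j, h⟩ := fun x v j => rfl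
  have hsec : ∀ x : {j : S // j = i} → ℝ,
      (Measure.pi fun _ : {j : S // ¬ j = i} => stdGumbel)
          (Prod.mk x ⁻¹'
            (⇑(MeasurableEquiv.piEquivPiSubtypeProd (fun _ : S => ℝ) (fun j => j = i)).symm ⁻¹' B))
        = ENNReal.ofReal (Real.exp (-(a * Real.exp (-(x ⟨i, rfl⟩))))) := by
    intro x
    set E : ℝ := Real.exp (-(x ⟨i, rfl⟩)) with hE
    have hset : Prod.mk x ⁻¹'
          (⇑(MeasurableEquiv.piEquivPiSubtypeProd (fun _ : S => ℝ) (fun j => j = i)).symm ⁻¹' B)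
        = Set.pi Set.univ
            (fun j : {j : S // ¬ j = i} => Set.Iio (c i + x ⟨i, rfl⟩ - c j.1)) := by
      ext v
      simp only [Set.mem_preimage, hB, Set.mem_setOf_eq, Set.mem_pi, Set.mem_univ,
        Set.mem_Iio, forall_true_left]
      constructor
      · intro h j
        have h2 := h j.1 j.2
        rw [hev, hev, dif_neg j.2, dif_pos rfl] at h2
        linarith [h2]
      · intro h j hj
        rw [hev, hev, dif_neg hj, dif_pos rfl]
        linarith [h ⟨j, hj⟩]
    have hIio : ∀ j : {j : S // ¬ j = i},
        stdGumbel (Set.Iio (c i + x ⟨i, rfl⟩ - c j.1))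
          = ENNReal.ofReal (Real.exp (-(p j.1 / p i * E))) := by
      intro j
      rw [stdGumbel_Iio]
      congr 2
      rw [hc, hE]
      rw [show -(c i + x ⟨i, rfl⟩ - c j.1) = c j.1 - c i + -(x ⟨i, rfl⟩) by ring,
        Real.exp_add, Real.exp_sub, Real.exp_log (hpos j.1), Real.exp_log (hpos i)]
    calc (Measure.pi fun _ : {j : S // ¬ j = i} => stdGumbel)
          (Prod.mk x ⁻¹'
            (⇑(MeasurableEquiv.piEquivPiSubtypeProd (fun _ : S => ℝ) (fun j => j = i)).symm ⁻¹' B))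
        = ∏ j : {j : S // ¬ j = i}, stdGumbel (Set.Iio (c i + x ⟨i, rfl⟩ - c j.1)) := by
          rw [hset, Measure.pi_pi]
      _ = ∏ j : {j : S // ¬ j = i}, ENNReal.ofReal (Real.exp (-(p j.1 / p i * E))) :=
          Finset.prod_congr rfl (fun j _ => hIio j)
      _ = ENNReal.ofReal (∏ j : {j : S // ¬ j = i}, Real.exp (-(p j.1 / p i * E))) :=
          (ENNReal.ofReal_prod_of_nonneg (fun j _ => (Real.exp_pos _).le)).symm
      _ = ENNReal.ofReal (Real.exp (∑ j : {j : S // ¬ j = i}, -(p j.1 / p i * E))) := by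
          rw [Real.exp_sum]
      _ = ENNReal.ofReal (Real.exp (-(a * E))) := by
          congr 2
          rw [Finset.sum_congr rfl
            (fun (j : {j : S // ¬ j = i}) _ =>
              show -(p j.1 / p i * E) = p j.1 * (-E / p i) by ring),
            ← Finset.sum_mul, hsub, ha]
          field_simp
  have hBpre : B
      = ⇑(MeasurableEquiv.piEquivPiSubtypeProd (fun _ : S => ℝ) (fun j => j = i)) ⁻¹'
        (⇑(MeasurableEquiv.piEquivPiSubtypeProd (fun _ : S => ℝ) (fun j => j = i)).symm ⁻¹' B) := by
    rw [← Set.preimage_comp, MeasurableEquiv.symm_comp_self, Set.preimage_id]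
  show (Measure.pi fun _ : S => stdGumbel) B = ENNReal.ofReal (p i)
  rw [hBpre, ← MeasurableEquiv.map_apply, hmp.map_eq,
    Measure.prod_apply
      ((MeasurableEquiv.piEquivPiSubtypeProd (fun _ : S => ℝ) (fun j => j = i)).symm.measurable
        hBmeas),
    lintegral_congr hsec]
  have hfin : (∫⁻ t, ENNReal.ofReal (Real.exp (-(a * Real.exp (-t)))) ∂stdGumbel)
      = ENNReal.ofReal (p i) := by
    have h1 : a + 1 = 1 / p i := by
      rw [ha]
      field_simp [(hpos i).ne']
      ring
    rw [lintegral_gumbel a ha0, h1, one_div_one_div]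
  rw [← hfin]
  convert lintegral_pi_single (⟨i, rfl⟩ : {j : S // j = i}) (fun j => Subtype.ext j.2) stdGumbel
      (fun t : ℝ => ENNReal.ofReal (Real.exp (-(a * Real.exp (-t))))) (by fun_prop) using 2
  congr!
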